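/- Let A, B be real symmetric n×n matrices with B ≥ 0 entrywise and A positive definite. If xᵀ A x − |x|ᵀ B |x| > 0 for every nonzero x ∈ ℝ^n, then for every b ∈ ℝ^n the generalized absolute value equation A x − B |x| = b has exactly one solution x ∈ ℝ^n. -/

import Mathlib

open Matrix

/-- The homotopy map for the GAVE. -/
noncomputable def gaveF {n : ℕ} (A B : Matrix (Fin n) (Fin n) ℝ) (t : ℝ) (x : Fin n → ℝ) :
    Fin n → ℝ :=
  A.mulVec x - t • B.mulVec (fun i => |x i|)

/-- Nonvanishing of `A z - t • B (d * z)` for `t ∈ [0,1]`, `|d| ≤ 1`, `z ≠ 0`. -/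
lemma gave_key {n : ℕ} (A B : Matrix (Fin n) (Fin n) ℝ)
    (hB : ∀ i j, 0 ≤ B i j)
    (h : ∀ x : Fin n → ℝ, x ≠ 0 →
      0 < x ⬝ᵥ A.mulVec x - (fun i => |x i|) ⬝ᵥ B.mulVec (fun i => |x i|))
    (t : ℝ) (ht0 : 0 ≤ t) (ht1 : t ≤ 1) (d : Fin n → ℝ) (hd : ∀ i, |d i| ≤ 1)
    (z : Fin n → ℝ) (hz : z ≠ 0) :
    A.mulVec z - t • B.mulVec (d * z) ≠ 0 := by
  intro h0
  have hzero : A.mulVec z = t • B.mulVec (d * z) := by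
    have := sub_eq_zero.mp h0; exact this
  have hdot : z ⬝ᵥ A.mulVec z = t * (z ⬝ᵥ B.mulVec (d * z)) := by
    rw [hzero]
    simp [dotProduct_smul, smul_eq_mul]
  set R : ℝ := (fun i => |z i|) ⬝ᵥ B.mulVec (fun i => |z i|) with hR
  have hRnonneg : 0 ≤ R := by
    rw [hR]
    simp only [dotProduct, mulVec, Finset.mul_sum]
    apply Finset.sum_nonneg
    intro i _
    apply Finset.sum_nonneg
    intro j _
    exact mul_nonneg (abs_nonneg _) (mul_nonneg (hB i j) (abs_nonneg _))
  have hsle : z ⬝ᵥ B.mulVec (d * z) ≤ R := by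
    rw [hR]
    simp only [dotProduct, mulVec, dotProduct, Finset.mul_sum]
    apply Finset.sum_le_sum
    intro i _
    apply Finset.sum_le_sum
    intro j _
    have h1 : z i * (B i j * (d * z) j) ≤ |z i * (B i j * (d * z) j)| := le_abs_self _
    have h2 : |z i * (B i j * (d * z) j)| = |z i| * (B i j * (|d j| * |z j|)) := by
      simp [abs_mul, abs_of_nonneg (hB i j), Pi.mul_apply]
    refine h1.trans ?_
    rw [h2]
    apply mul_le_mul_of_nonneg_left _ (abs_nonneg _)
    apply mul_le_mul_of_nonneg_left _ (hB i j)
    exact mul_le_of_le_one_left (abs_nonneg _) (hd j)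
  have hts : t * (z ⬝ᵥ B.mulVec (d * z)) ≤ R := by
    rcases le_or_gt (z ⬝ᵥ B.mulVec (d * z)) 0 with hs | hs
    · exact (mul_nonpos_of_nonneg_of_nonpos ht0 hs).trans hRnonneg
    · calc t * (z ⬝ᵥ B.mulVec (d * z)) ≤ 1 * (z ⬝ᵥ B.mulVec (d * z)) :=
            mul_le_mul_of_nonneg_right ht1 hs.le
        _ = _ := one_mul _
        _ ≤ R := hsle
  have := h z hz
  rw [hdot] at this
  linarith

lemma gave_lower {n : ℕ} (hn : 0 < n) (A B : Matrix (Fin n) (Fin n) ℝ)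
    (hB : ∀ i j, 0 ≤ B i j)
    (h : ∀ x : Fin n → ℝ, x ≠ 0 →
      0 < x ⬝ᵥ A.mulVec x - (fun i => |x i|) ⬝ᵥ B.mulVec (fun i => |x i|)) :
    ∃ c > (0:ℝ), ∀ t : ℝ, 0 ≤ t → t ≤ 1 → ∀ d : Fin n → ℝ, (∀ i, |d i| ≤ 1) →
      ∀ z : Fin n → ℝ, c * ‖z‖ ≤ ‖A.mulVec z - t • B.mulVec (d * z)‖ := by
  haveI : Nonempty (Fin n) := ⟨⟨0, hn⟩⟩
  set φ : ℝ × (Fin n → ℝ) × (Fin n → ℝ) → ℝ :=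
    fun p => ‖A.mulVec p.2.2 - p.1 • B.mulVec (p.2.1 * p.2.2)‖ with hφ
  have hA_cont : Continuous fun z : Fin n → ℝ => A.mulVec z :=
    (Matrix.mulVecLin A).continuous_of_finiteDimensional
  have hB_cont : Continuous fun z : Fin n → ℝ => B.mulVec z :=
    (Matrix.mulVecLin B).continuous_of_finiteDimensional
  have hcont : Continuous φ := by
    apply Continuous.norm
    apply Continuous.sub
    · exact hA_cont.comp (continuous_snd.comp continuous_snd)
    · exact continuous_fst.smul
        (hB_cont.comp ((continuous_fst.comp continuous_snd).mul
          (continuous_snd.comp continuous_snd)))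
  set K : Set (ℝ × (Fin n → ℝ) × (Fin n → ℝ)) :=
    (Set.Icc (0:ℝ) 1) ×ˢ (Set.Icc (-1 : Fin n → ℝ) 1) ×ˢ (Metric.sphere (0 : Fin n → ℝ) 1)
    with hK
  have hKc : IsCompact K := (isCompact_Icc).prod ((isCompact_Icc).prod (isCompact_sphere _ _))
  have hKne : K.Nonempty := by
    refine ⟨(0, 0, fun _ => 1), ?_⟩
    rw [hK]
    refine ⟨Set.mem_Icc.mpr ⟨le_refl _, zero_le_one⟩, Set.mem_Icc.mpr ⟨?_, ?_⟩, ?_⟩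
    · intro i; simp
    · intro i; simp
    · rw [mem_sphere_zero_iff_norm]
      have : ‖(fun _ : Fin n => (1:ℝ))‖ = ‖(1:ℝ)‖ := pi_norm_const (1:ℝ)
      simpa using this
  obtain ⟨p, hpK, hpmin⟩ := hKc.exists_isMinOn hKne hcont.continuousOn
  obtain ⟨t₀, d₀, z₀⟩ := p
  obtain ⟨hpt, hpd, hpz⟩ := hpK
  refine ⟨φ (t₀, d₀, z₀), ?_, ?_⟩
  · have hz₀ : z₀ ≠ 0 := by
      intro h0
      have := mem_sphere_zero_iff_norm.mp hpz
      rw [h0] at this; simp at this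
    have hd₀ : ∀ i, |d₀ i| ≤ 1 := by
      intro i
      have h1 := (Set.mem_Icc.mp hpd).1 i
      have h2 := (Set.mem_Icc.mp hpd).2 i
      simp only [Pi.neg_apply, Pi.one_apply] at h1 h2
      exact abs_le.mpr ⟨h1, h2⟩
    have := gave_key A B hB h t₀ (Set.mem_Icc.mp hpt).1 (Set.mem_Icc.mp hpt).2 d₀ hd₀ z₀ hz₀
    simpa [hφ] using norm_pos_iff.mpr this
  · intro t ht0 ht1 d hd z
    by_cases hz : z = 0
    · subst hz; simp
    · have hz' : ‖z‖ ≠ 0 := norm_ne_zero_iff.mpr hz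
      obtain ⟨u, hunorm, hzu⟩ : ∃ u : Fin n → ℝ, ‖u‖ = 1 ∧ z = ‖z‖ • u :=
        ⟨‖z‖⁻¹ • z, by rw [norm_smul, norm_inv, norm_norm, inv_mul_cancel₀ hz'],
          (smul_inv_smul₀ hz' z).symm⟩
      have humem : (t, d, u) ∈ K := by
        rw [hK]
        refine ⟨Set.mem_Icc.mpr ⟨ht0, ht1⟩, Set.mem_Icc.mpr ⟨?_, ?_⟩,
          mem_sphere_zero_iff_norm.mpr hunorm⟩
        · intro i; simpa using neg_le_of_abs_le (hd i)
        · intro i; simpa using le_of_abs_le (hd i)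
      have hmin := hpmin humem
      have hdec : A.mulVec z - t • B.mulVec (d * z) =
          ‖z‖ • (A.mulVec u - t • B.mulVec (d * u)) := by
        conv_lhs => rw [hzu]
        have h1 : d * (‖z‖ • u) = ‖z‖ • (d * u) := by
          funext i; simp [Pi.smul_apply, Pi.mul_apply]; ring
        rw [h1, Matrix.mulVec_smul, Matrix.mulVec_smul, smul_sub, smul_comm t ‖z‖]
      rw [hdec, norm_smul, norm_norm, mul_comm (φ (t₀,d₀,z₀)) ‖z‖]
      exact mul_le_mul_of_nonneg_left hmin (norm_nonneg z)

/-- One continuation step. -/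
lemma gave_step {n : ℕ} (A B : Matrix (Fin n) (Fin n) ℝ) (c L : ℝ)
    (hc : 0 < c)
    (hlow : ∀ t : ℝ, 0 ≤ t → t ≤ 1 → ∀ x y : Fin n → ℝ,
      c * ‖x - y‖ ≤ ‖gaveF A B t x - gaveF A B t y‖)
    (hL : 0 ≤ L)
    (hN : ∀ x y : Fin n → ℝ,
      ‖B.mulVec (fun i => |x i|) - B.mulVec (fun i => |y i|)‖ ≤ L * ‖x - y‖)
    (t t' : ℝ) (ht0 : 0 ≤ t) (ht1 : t ≤ 1) (ht'0 : 0 ≤ t') (ht'1 : t' ≤ 1)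
    (hclose : |t' - t| ≤ c / (2 * (L + 1)))
    (hS : ∀ b : Fin n → ℝ, ∃ x, gaveF A B t x = b) :
    ∀ b : Fin n → ℝ, ∃ x, gaveF A B t' x = b := by
  intro b
  set N : (Fin n → ℝ) → (Fin n → ℝ) := fun x => B.mulVec (fun i => |x i|) with hNdef
  set Finv : (Fin n → ℝ) → (Fin n → ℝ) := fun y => (hS y).choose with hFinv
  have hFinv_spec : ∀ y, gaveF A B t (Finv y) = y := fun y => (hS y).choose_spec
  set Φ : (Fin n → ℝ) → (Fin n → ℝ) := fun x => Finv (b + (t' - t) • N x) with hΦ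
  have hcontr : ∀ x y, dist (Φ x) (Φ y) ≤ 2⁻¹ * dist x y := by
    intro x y
    rw [dist_eq_norm, dist_eq_norm]
    have h1 := hlow t ht0 ht1 (Φ x) (Φ y)
    rw [hΦ] at h1
    simp only [hFinv_spec] at h1
    have h2 : (b + (t' - t) • N x) - (b + (t' - t) • N y) = (t' - t) • (N x - N y) := by
      rw [smul_sub]; abel
    rw [h2, norm_smul, Real.norm_eq_abs] at h1
    have h3 : |t' - t| * ‖N x - N y‖ ≤ (c / (2 * (L + 1))) * (L * ‖x - y‖) := by
      apply mul_le_mul hclose (hN x y) (norm_nonneg _)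
      positivity
    have h4 : (c / (2 * (L + 1))) * L ≤ c / 2 := by
      rw [div_mul_eq_mul_div, div_le_div_iff₀ (by positivity) (by norm_num)]
      nlinarith
    have h5 : c * ‖Φ x - Φ y‖ ≤ (c / 2) * ‖x - y‖ := by
      calc c * ‖Φ x - Φ y‖ ≤ |t' - t| * ‖N x - N y‖ := h1
        _ ≤ (c / (2 * (L + 1))) * (L * ‖x - y‖) := h3
        _ = ((c / (2 * (L + 1))) * L) * ‖x - y‖ := by ring
        _ ≤ (c / 2) * ‖x - y‖ := mul_le_mul_of_nonneg_right h4 (norm_nonneg _)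
    rw [← mul_le_mul_iff_right₀ hc]
    calc c * ‖Φ x - Φ y‖ ≤ (c / 2) * ‖x - y‖ := h5
      _ = c * (2⁻¹ * ‖x - y‖) := by ring
  have hK : (2⁻¹ : NNReal) < 1 := by rw [← NNReal.coe_lt_coe]; norm_num
  have hlip : LipschitzWith (2⁻¹ : NNReal) Φ := by
    apply LipschitzWith.of_dist_le_mul
    intro x y
    have : ((2⁻¹ : NNReal) : ℝ) = 2⁻¹ := by norm_num
    rw [this]
    exact hcontr x y
  have hctr : ContractingWith (2⁻¹ : NNReal) Φ := ⟨hK, hlip⟩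
  obtain ⟨x, hx⟩ : ∃ x, Φ x = x := ⟨hctr.fixedPoint Φ, hctr.fixedPoint_isFixedPt⟩
  refine ⟨x, ?_⟩
  have hFx : gaveF A B t x = b + (t' - t) • N x := by
    conv_lhs => rw [← hx]
    exact hFinv_spec _
  have : A.mulVec x - t • N x = b + (t' - t) • N x := hFx
  rw [gaveF]
  rw [show t' • N x = t • N x + (t' - t) • N x by rw [sub_smul]; abel]
  rw [sub_add_eq_sub_sub, this]
  abel

/-- If `A`, `B` are symmetric, `B ≥ 0` entrywise, `A` is positive
definite, and `xᵀ A x − |x|ᵀ B |x| > 0` for every nonzero `x`, then for every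
`b` the GAVE `A x − B |x| = b` has exactly one solution. -/
theorem gave_unique_of_posdef_quadratic {n : ℕ} (A B : Matrix (Fin n) (Fin n) ℝ)
    (hAsymm : A.IsSymm) (hBsymm : B.IsSymm)
    (hB : ∀ i j, 0 ≤ B i j) (hA : A.PosDef)
    (h : ∀ x : Fin n → ℝ, x ≠ 0 →
      0 < x ⬝ᵥ A.mulVec x - (fun i => |x i|) ⬝ᵥ B.mulVec (fun i => |x i|)) :
    ∀ b : Fin n → ℝ,
      ∃! x : Fin n → ℝ, A.mulVec x - B.mulVec (fun i => |x i|) = b := by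
  intro b
  rcases Nat.eq_zero_or_pos n with hn | hn
  · subst hn
    refine ⟨0, funext fun i => i.elim0, fun y _ => funext fun i => i.elim0⟩
  -- positive dimension
  obtain ⟨c, hc, hclow⟩ := gave_lower hn A B hB h
  -- lower bound for differences of gaveF
  have hlow : ∀ t : ℝ, 0 ≤ t → t ≤ 1 → ∀ x y : Fin n → ℝ,
      c * ‖x - y‖ ≤ ‖gaveF A B t x - gaveF A B t y‖ := by
    intro t ht0 ht1 x y
    set z := x - y with hz
    by_cases hz0 : z = 0
    · rw [hz0]; simpa using mul_nonneg hc.le (norm_nonneg _)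
    · set d : Fin n → ℝ := fun i => if z i = 0 then 0 else (|x i| - |y i|) / z i with hd
      have hdle : ∀ i, |d i| ≤ 1 := by
        intro i
        rw [hd]
        by_cases hzi : z i = 0
        · simp [hzi]
        · simp only [hzi, if_false]
          rw [abs_div, div_le_one (abs_pos.mpr hzi)]
          calc |(|x i| - |y i|)| ≤ |x i - y i| := abs_abs_sub_abs_le_abs_sub _ _
            _ = |z i| := by rw [hz]; rfl
      have hdz : d * z = fun i => |x i| - |y i| := by
        funext i
        rw [Pi.mul_apply, hd]
        by_cases hzi : z i = 0
        · have hxy : x i = y i := by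
            have : x i - y i = 0 := by rw [hz] at hzi; exact hzi
            linarith
          simp [hzi, hxy]
        · simp only [hzi, if_false]
          exact div_mul_cancel₀ _ hzi
      have heq : gaveF A B t x - gaveF A B t y = A.mulVec z - t • B.mulVec (d * z) := by
        rw [gaveF, gaveF, hdz]
        have h1 : A.mulVec z = A.mulVec x - A.mulVec y := by rw [hz, Matrix.mulVec_sub]
        have h2 : B.mulVec (fun i => |x i| - |y i|) =
            B.mulVec (fun i => |x i|) - B.mulVec (fun i => |y i|) := by
          rw [← Matrix.mulVec_sub]; rfl
        rw [h1, h2, smul_sub]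
        abel
      rw [heq]
      exact hclow t ht0 ht1 d hdle z
  -- Lipschitz bound for the nonlinear part
  set Bc : (Fin n → ℝ) →L[ℝ] (Fin n → ℝ) :=
    LinearMap.toContinuousLinearMap (Matrix.mulVecLin B) with hBc
  set L : ℝ := ‖Bc‖ with hL
  have hL0 : 0 ≤ L := norm_nonneg _
  have hN : ∀ x y : Fin n → ℝ,
      ‖B.mulVec (fun i => |x i|) - B.mulVec (fun i => |y i|)‖ ≤ L * ‖x - y‖ := by
    intro x y
    have h1 : B.mulVec (fun i => |x i|) - B.mulVec (fun i => |y i|) =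
        Bc ((fun i => |x i|) - (fun i => |y i|)) := by
      rw [hBc]; simp [Matrix.mulVec_sub]
    rw [h1]
    calc ‖Bc ((fun i => |x i|) - (fun i => |y i|))‖
        ≤ L * ‖(fun i => |x i|) - (fun i => |y i|)‖ := Bc.le_opNorm _
      _ ≤ L * ‖x - y‖ := by
          apply mul_le_mul_of_nonneg_left _ hL0
          apply pi_norm_le_iff_of_nonneg (norm_nonneg _) |>.mpr
          intro i
          calc ‖((fun i => |x i|) - (fun i => |y i|)) i‖ = |(|x i| - |y i|)| := by
                simp [Real.norm_eq_abs]
            _ ≤ |x i - y i| := abs_abs_sub_abs_le_abs_sub _ _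
            _ = ‖(x - y) i‖ := by simp [Real.norm_eq_abs]
            _ ≤ ‖x - y‖ := norm_le_pi_norm _ i
  set ε : ℝ := c / (2 * (L + 1)) with hε
  have hεpos : 0 < ε := by positivity
  -- induction along the homotopy parameter
  have main : ∀ k : ℕ, ∀ t : ℝ, 0 ≤ t → t ≤ 1 → t ≤ k * ε →
      ∀ b' : Fin n → ℝ, ∃ x, gaveF A B t x = b' := by
    intro k
    induction k with
    | zero =>
      intro t ht0 ht1 htk b'
      have ht : t = 0 := le_antisymm (by simpa using htk) ht0
      subst ht
      have hdet : A.det ≠ 0 := hA.det_pos.ne'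
      refine ⟨A⁻¹.mulVec b', ?_⟩
      rw [gaveF, zero_smul, sub_zero, Matrix.mulVec_mulVec,
        Matrix.mul_nonsing_inv A (isUnit_iff_ne_zero.mpr hdet), Matrix.one_mulVec]
    | succ k ih =>
      intro t ht0 ht1 htk b'
      by_cases hkt : t ≤ k * ε
      · exact ih t ht0 ht1 hkt b'
      · push_neg at hkt
        set t₀ : ℝ := max (t - ε) 0 with ht₀
        have hkε : (0:ℝ) ≤ k * ε := by positivity
        have ht₀0 : 0 ≤ t₀ := le_max_right _ _
        have ht₀t : t₀ ≤ t := max_le (by linarith) ht0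
        have ht₀1 : t₀ ≤ 1 := le_trans ht₀t ht1
        have ht₀k : t₀ ≤ k * ε := by
          apply max_le _ hkε
          have : t ≤ (k + 1) * ε := by
            calc t ≤ (k + 1 : ℕ) * ε := htk
              _ = (k + 1) * ε := by push_cast; ring
          linarith
        have hclose : |t - t₀| ≤ ε := by
          rw [abs_le]
          constructor
          · linarith [le_max_left (t - ε) 0]
          · linarith [le_max_left (t - ε) 0]
        exact gave_step A B c L hc hlow hL0 hN t₀ t ht₀0 ht₀1 ht0 ht1 hclose
          (ih t₀ ht₀0 ht₀1 ht₀k) b'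
  obtain ⟨k, hk⟩ := exists_nat_ge (1 / ε)
  have h1k : (1:ℝ) ≤ k * ε := by
    rw [div_le_iff₀ hεpos] at hk
    linarith
  obtain ⟨x, hx⟩ := main k 1 zero_le_one le_rfl h1k b
  refine ⟨x, ?_, ?_⟩
  · rw [gaveF, one_smul] at hx
    exact hx
  · intro y hy
    have h1 : gaveF A B 1 y = gaveF A B 1 x := by
      simp only [gaveF, one_smul] at hx ⊢
      rw [hy, hx]
    have h2 := hlow 1 zero_le_one le_rfl y x
    rw [h1] at h2
    simp only [sub_self, norm_zero] at h2
    have h3 : ‖y - x‖ = 0 := le_antisymm (by nlinarith) (norm_nonneg _)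
    have := norm_eq_zero.mp h3
    exact sub_eq_zero.mp this
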